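/- Let ε := √2 · 10⁻³. Suppose W = (w₁,w₂,w₃,w₄) and Ŵ = (ŵ₁,ŵ₂,ŵ₃,ŵ₄) are points of ℂ⁴ satisfying w₁w₂ + w₃w₄ = 1 and ŵ₁ŵ₂ + ŵ₃ŵ₄ = 1, with |w₂ − conj(w₁)| < ε, |w₄ − conj(w₃)| < ε, |ŵ₂ − conj(ŵ₁)| < ε, |ŵ₄ − conj(ŵ₃)| < ε. If F(W) = F(Ŵ), then W = Ŵ. That is, F is injective on the neighborhood U_ε of S³ in the quadric. -/

import Mathlib

open Complex


lemma key_ne (t : ℝ) (p p' u u' : ℂ) (hp : p = (t:ℂ) + u) (hp' : p' = (t:ℂ) + u')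
    (ht0 : 0 ≤ t) (ht : t ≤ 1.0021)
    (hu : ‖u‖ ≤ 0.0015) (hu' : ‖u'‖ ≤ 0.0015) :
    1 + (I-2)*(p+p') - (I-1)*(p^2+p*p'+p'^2) ≠ 0 := by
  intro h
  set N₀ : ℂ := ((1 - 4*t + 3*t^2 : ℝ) : ℂ) + ((2*t - 3*t^2 : ℝ) : ℂ)*I with hN₀def
  have hN₀ : (1/3 : ℝ) ≤ ‖N₀‖ := by
    have h2 : (‖N₀‖)^2 = (1-4*t+3*t^2)^2 + (2*t-3*t^2)^2 := by
      rw [Complex.sq_norm, hN₀def, Complex.normSq_add_mul_I]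
    nlinarith [sq_nonneg (9*t^2 - 9*t + 2), norm_nonneg N₀]
  -- express N₀ = -E
  have hsub : N₀ = -((I-2)*(u+u') - (I-1)*(u*(p+(t:ℂ)) + (u*p' + (t:ℂ)*u') + u'*(p'+(t:ℂ)))) := by
    rw [hp, hp'] at h
    rw [hN₀def, hp, hp']
    push_cast
    linear_combination h
  -- bounds
  have habsI2 : ‖I - 2‖ ≤ 2.24 := by
    have : (‖I-2‖)^2 = 5 := by
      rw [Complex.sq_norm]; simp [Complex.normSq_apply]; norm_num
    nlinarith [norm_nonneg (I-2)]
  have habsI1 : ‖I - 1‖ ≤ 1.415 := by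
    have : (‖I-1‖)^2 = 2 := by
      rw [Complex.sq_norm]; simp [Complex.normSq_apply]; norm_num
    nlinarith [norm_nonneg (I-1)]
  have habst : ‖(t:ℂ)‖ = t := by rw [Complex.norm_real, Real.norm_of_nonneg ht0]
  have hpabs : ‖p‖ ≤ 1.0036 := by
    rw [hp]
    calc ‖(t:ℂ) + u‖ ≤ ‖(t:ℂ)‖ + ‖u‖ := norm_add_le _ _
    _ ≤ 1.0036 := by rw [habst]; linarith
  have hpabs' : ‖p'‖ ≤ 1.0036 := by
    rw [hp']
    calc ‖(t:ℂ) + u'‖ ≤ ‖(t:ℂ)‖ + ‖u'‖ := norm_add_le _ _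
    _ ≤ 1.0036 := by rw [habst]; linarith
  have key : ‖N₀‖ ≤ 0.02 := by
    rw [hsub, norm_neg]
    have h1 : ‖(I-2)*(u+u')‖ ≤ 2.24 * 0.003 := by
      rw [norm_mul]
      have : ‖u+u'‖ ≤ 0.003 := le_trans (norm_add_le _ _) (by linarith)
      exact mul_le_mul habsI2 this (norm_nonneg _) (by norm_num)
    have h2 : ‖u*(p+(t:ℂ)) + (u*p' + (t:ℂ)*u') + u'*(p'+(t:ℂ))‖ ≤ 0.0015*6.0214 := by
      have b1 : ‖u*(p+(t:ℂ))‖ ≤ 0.0015 * 2.0057 := by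
        rw [norm_mul]
        have : ‖p+(t:ℂ)‖ ≤ 2.0057 :=
          le_trans (norm_add_le _ _) (by rw [habst]; linarith)
        exact mul_le_mul hu this (norm_nonneg _) (by norm_num)
      have b2 : ‖u*p' + (t:ℂ)*u'‖ ≤ 0.0015*1.0036 + 1.0021*0.0015 := by
        refine le_trans (norm_add_le _ _) ?_
        rw [norm_mul, norm_mul, habst]
        have := norm_nonneg u
        have := norm_nonneg u'
        have := norm_nonneg p'
        nlinarith
      have b3 : ‖u'*(p'+(t:ℂ))‖ ≤ 0.0015 * 2.0057 := by
        rw [norm_mul]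
        have : ‖p'+(t:ℂ)‖ ≤ 2.0057 :=
          le_trans (norm_add_le _ _) (by rw [habst]; linarith)
        exact mul_le_mul hu' this (norm_nonneg _) (by norm_num)
      calc ‖u*(p+(t:ℂ)) + (u*p' + (t:ℂ)*u') + u'*(p'+(t:ℂ))‖
          ≤ ‖u*(p+(t:ℂ)) + (u*p' + (t:ℂ)*u')‖ + ‖u'*(p'+(t:ℂ))‖ :=
            norm_add_le _ _
        _ ≤ ‖u*(p+(t:ℂ))‖ + ‖u*p' + (t:ℂ)*u'‖ + ‖u'*(p'+(t:ℂ))‖ := by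
            have := norm_add_le (u*(p+(t:ℂ))) (u*p' + (t:ℂ)*u'); linarith
        _ ≤ 0.0015*6.0214 := by norm_num at b1 b2 b3 ⊢; linarith
    calc ‖(I-2)*(u+u') - (I-1)*(u*(p+(t:ℂ)) + (u*p' + (t:ℂ)*u') + u'*(p'+(t:ℂ)))‖
        ≤ ‖(I-2)*(u+u')‖ + ‖(I-1)*(u*(p+(t:ℂ)) + (u*p' + (t:ℂ)*u') + u'*(p'+(t:ℂ)))‖ := by
          rw [sub_eq_add_neg]
          refine le_trans (norm_add_le _ _) ?_
          rw [norm_neg]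
      _ ≤ 0.02 := by
          rw [norm_mul]
          have hc := mul_le_mul habsI1 h2 (norm_nonneg _) (by norm_num)
          norm_num at h1 hc ⊢
          linarith
  linarith



/-- With `ε = √2·10⁻³`, the map `F(w) = (w₁, w₃, w₂w₃w₄² + i·w₁w₂²w₄)` is
injective on the neighborhood `U_ε = {w ∈ Q³ : |w₂ − conj w₁| < ε, |w₄ − conj w₃| < ε}`
of `S³` in the quadric `Q³ = {w₁w₂ + w₃w₄ = 1}`. -/
theorem stmt_16 (w₁ w₂ w₃ w₄ w₁' w₂' w₃' w₄' : ℂ)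
    (hQ : w₁ * w₂ + w₃ * w₄ = 1) (hQ' : w₁' * w₂' + w₃' * w₄' = 1)
    (hμ : ‖w₂ - starRingEnd ℂ w₁‖ < Real.sqrt 2 * 10 ^ (-3 : ℤ))
    (hη : ‖w₄ - starRingEnd ℂ w₃‖ < Real.sqrt 2 * 10 ^ (-3 : ℤ))
    (hμ' : ‖w₂' - starRingEnd ℂ w₁'‖ < Real.sqrt 2 * 10 ^ (-3 : ℤ))
    (hη' : ‖w₄' - starRingEnd ℂ w₃'‖ < Real.sqrt 2 * 10 ^ (-3 : ℤ))
    (hF : (w₁, w₃, w₂ * w₃ * w₄ ^ 2 + Complex.I * w₁ * w₂ ^ 2 * w₄) =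
      (w₁', w₃', w₂' * w₃' * w₄' ^ 2 + Complex.I * w₁' * w₂' ^ 2 * w₄')) :
    (w₁, w₂, w₃, w₄) = (w₁', w₂', w₃', w₄') := by
  obtain ⟨h1, h3, hG⟩ : w₁ = w₁' ∧ w₃ = w₃' ∧
      w₂ * w₃ * w₄ ^ 2 + Complex.I * w₁ * w₂ ^ 2 * w₄ =
        w₂' * w₃' * w₄' ^ 2 + Complex.I * w₁' * w₂' ^ 2 * w₄' := by
    simpa [Prod.ext_iff] using hF
  subst h1 h3
  suffices h : w₂ = w₂' ∧ w₄ = w₄' by rw [h.1, h.2]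
  -- epsilon bound
  have hε : Real.sqrt 2 * 10 ^ (-3 : ℤ) ≤ 0.00142 := by
    have h2 : Real.sqrt 2 ≤ 1.42 := by
      rw [show (1.42:ℝ) = Real.sqrt (1.42^2) from (Real.sqrt_sq (by norm_num)).symm]
      exact Real.sqrt_le_sqrt (by norm_num)
    have : (10:ℝ) ^ (-3 : ℤ) = 1/1000 := by norm_num
    rw [this]; linarith
  by_cases ha : w₁ = 0
  · subst ha
    simp only [zero_mul, zero_add, mul_zero, Complex.I] at hQ hQ' hG
    have hw3 : w₃ ≠ 0 := by intro h; rw [h, zero_mul] at hQ; exact one_ne_zero hQ.symm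
    have h4 : w₄ = w₄' := by
      have : w₃ * w₄ = w₃ * w₄' := by rw [hQ, hQ']
      exact mul_left_cancel₀ hw3 this
    refine ⟨?_, h4⟩
    have hw4 : w₄ ≠ 0 := by intro h; rw [h, mul_zero] at hQ; exact one_ne_zero hQ.symm
    have hG2 : w₂ * (w₃ * w₄ ^ 2) = w₂' * (w₃ * w₄ ^ 2) := by
      rw [← h4] at hG
      linear_combination hG
    exact mul_right_cancel₀ (mul_ne_zero hw3 (pow_ne_zero 2 hw4)) hG2
  · by_cases hc : w₃ = 0
    · subst hc
      simp only [mul_zero, zero_mul, zero_add, add_zero] at hQ hQ' hG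
      have h2 : w₂ = w₂' := by
        have : w₁ * w₂ = w₁ * w₂' := by rw [hQ, hQ']
        exact mul_left_cancel₀ ha this
      refine ⟨h2, ?_⟩
      have hw2 : w₂ ≠ 0 := by intro h; rw [h, mul_zero] at hQ; exact one_ne_zero hQ.symm
      have hG2 : (Complex.I * w₁ * w₂ ^ 2) * w₄ = (Complex.I * w₁ * w₂ ^ 2) * w₄' := by
        rw [← h2] at hG
        linear_combination hG
      refine mul_left_cancel₀ ?_ hG2
      simp [Complex.I_ne_zero, ha, hw2]
    · -- main case
      set u : ℂ := w₁ * (w₂ - starRingEnd ℂ w₁) with hudef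
      set u' : ℂ := w₁ * (w₂' - starRingEnd ℂ w₁) with hudef'
      set v : ℂ := w₃ * (w₄ - starRingEnd ℂ w₃) with hvdef
      set t : ℝ := Complex.normSq w₁ with htdef
      set s : ℝ := Complex.normSq w₃ with hsdef
      set A : ℝ := ‖w₁‖ with hAdef
      set C : ℝ := ‖w₃‖ with hCdef
      have hA2 : A^2 = t := Complex.sq_norm w₁
      have hC2 : C^2 = s := Complex.sq_norm w₃
      have hA0 : 0 ≤ A := norm_nonneg w₁
      have hC0 : 0 ≤ C := norm_nonneg w₃
      have hp : w₁ * w₂ = (t:ℂ) + u := by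
        rw [hudef, htdef, ← Complex.mul_conj]; ring
      have hp' : w₁ * w₂' = (t:ℂ) + u' := by
        rw [hudef', htdef, ← Complex.mul_conj]; ring
      have hq : w₃ * w₄ = (s:ℂ) + v := by
        rw [hvdef, hsdef, ← Complex.mul_conj]; ring
      have hau : ‖u‖ ≤ A * 0.00142 := by
        rw [hudef, norm_mul]
        exact mul_le_mul_of_nonneg_left (le_trans hμ.le hε) hA0
      have hau' : ‖u'‖ ≤ A * 0.00142 := by
        rw [hudef', norm_mul]
        exact mul_le_mul_of_nonneg_left (le_trans hμ'.le hε) hA0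
      have hav : ‖v‖ ≤ C * 0.00142 := by
        rw [hvdef, norm_mul]
        exact mul_le_mul_of_nonneg_left (le_trans hη.le hε) hC0
      -- bound t + s
      have hRc : ((t + s : ℝ) : ℂ) = 1 - u - v := by
        push_cast
        rw [htdef, hsdef, ← Complex.mul_conj, ← Complex.mul_conj]
        linear_combination hQ
      have hR : t + s ≤ 1 + A * 0.00142 + C * 0.00142 := by
        have h0 : 0 ≤ t + s := add_nonneg (Complex.normSq_nonneg w₁) (Complex.normSq_nonneg w₃)
        calc t + s = ‖((t + s : ℝ) : ℂ)‖ := by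
              rw [Complex.norm_real, Real.norm_of_nonneg h0]
          _ = ‖1 - u - v‖ := by rw [hRc]
          _ ≤ ‖1 - u‖ + ‖v‖ := by
              rw [sub_eq_add_neg (1-u) v]
              refine le_trans (norm_add_le _ _) ?_
              rw [norm_neg]
          _ ≤ 1 + ‖u‖ + ‖v‖ := by
              have h1u : ‖1 - u‖ ≤ 1 + ‖u‖ := by
                rw [sub_eq_add_neg]
                have := norm_add_le (1:ℂ) (-u)
                rw [norm_neg] at this
                simpa using this
              linarith
          _ ≤ 1 + A * 0.00142 + C * 0.00142 := by linarith
      have hts : t + s ≤ 1.0021 := by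
        nlinarith [sq_nonneg (A - C), sq_nonneg (A + C - 1.42)]
      have ht : t ≤ 1.0021 := by nlinarith
      have hAle : A ≤ 1.002 := by nlinarith
      have hu15 : ‖u‖ ≤ 0.0015 := by nlinarith
      have hu15' : ‖u'‖ ≤ 0.0015 := by nlinarith
      -- key algebraic identity
      have hq1 : w₃ * w₄ = 1 - w₁ * w₂ := by linear_combination hQ
      have hq1' : w₃ * w₄' = 1 - w₁ * w₂' := by linear_combination hQ'
      have e1 : w₁ * w₃ * (w₂ * w₃ * w₄ ^ 2 + Complex.I * w₁ * w₂ ^ 2 * w₄)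
          = (w₁*w₂) * ((1 - w₁*w₂)^2 + Complex.I * (w₁*w₂) * (1 - w₁*w₂)) := by
        linear_combination (w₁*w₂*(w₃*w₄ + 1 - w₁*w₂) + Complex.I*(w₁*w₂)^2) * hq1
      have e1' : w₁ * w₃ * (w₂' * w₃ * w₄' ^ 2 + Complex.I * w₁ * w₂' ^ 2 * w₄')
          = (w₁*w₂') * ((1 - w₁*w₂')^2 + Complex.I * (w₁*w₂') * (1 - w₁*w₂')) := by
        linear_combination (w₁*w₂'*(w₃*w₄' + 1 - w₁*w₂') + Complex.I*(w₁*w₂')^2) * hq1'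
      have e3 : (w₁*w₂ - w₁*w₂') *
          (1 + (I-2)*((w₁*w₂)+(w₁*w₂')) - (I-1)*((w₁*w₂)^2+(w₁*w₂)*(w₁*w₂')+(w₁*w₂')^2)) = 0 := by
        linear_combination (-1) * e1 + e1' + (w₁*w₃) * hG
      have hN := key_ne t (w₁*w₂) (w₁*w₂') u u' hp hp' (Complex.normSq_nonneg w₁) ht hu15 hu15'
      have hpp : w₁*w₂ = w₁*w₂' := by
        rcases mul_eq_zero.mp e3 with h | h
        · exact sub_eq_zero.mp h
        · exact absurd h hN
      have h2 : w₂ = w₂' := mul_left_cancel₀ ha hpp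
      refine ⟨h2, ?_⟩
      have : w₃ * w₄ = w₃ * w₄' := by rw [hq1, hq1', hpp]
      exact mul_left_cancel₀ hc this
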